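/- (Idempotence of extension operators.) For every dimension d ≥ 1, every direction δ ∈ Fin d, and every finite set P of d-dimensional bricks, Ext_δ(Ext_δ(P)) = Ext_δ(P). -/
import Mathlib


open scoped Classical

noncomputable section

/-- The (integer-valued) indicator function of the half-open box
`∏ i, [w i, w i + b i)` in `ℝ^d`, i.e. of the translate by `w` of the brick `b`. -/
def brickInd {d : ℕ} (b : Fin d → ℕ) (w : Fin d → ℝ) (y : Fin d → ℝ) : ℤ :=
  if ∀ i, w i ≤ y i ∧ y i < w i + (b i : ℝ) then 1 else 0

/-- `t` is tilable by the protoset `P`: the indicator function of `t` is an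
integer-linear combination of indicator functions of translates of members of `P`. -/
def Tilable {d : ℕ} (P : Set (Fin d → ℕ)) (t : Fin d → ℕ) : Prop :=
  ∃ (m : ℕ) (p : Fin m → (Fin d → ℕ)) (w : Fin m → (Fin d → ℝ)) (γ : Fin m → ℤ),
    (∀ j, p j ∈ P) ∧
      ∀ y : Fin d → ℝ, brickInd t (fun _ => 0) y = ∑ j, γ j * brickInd (p j) (w j) y

/-- `t` is packable by the protoset `P`: as for tilability but with all coefficients 1. -/
def Packable {d : ℕ} (P : Set (Fin d → ℕ)) (t : Fin d → ℕ) : Prop :=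
  ∃ (m : ℕ) (p : Fin m → (Fin d → ℕ)) (w : Fin m → (Fin d → ℝ)),
    (∀ j, p j ∈ P) ∧
      ∀ y : Fin d → ℝ, brickInd t (fun _ => 0) y = ∑ j, brickInd (p j) (w j) y

/-- The divisibility partial order on bricks: `b ⪯ t` iff each sidelength of `b`
divides the corresponding sidelength of `t`. -/
def BrickLE {d : ℕ} (b t : Fin d → ℕ) : Prop := ∀ i, b i ∣ t i

/-- The set of `⪯`-minimal elements of a set of bricks. -/
def MinOf {d : ℕ} (S : Set (Fin d → ℕ)) : Set (Fin d → ℕ) :=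
  {t ∈ S | ∀ s ∈ S, BrickLE s t → s = t}

/-- `M(P)`: the set of `⪯`-minimal bricks among the bricks tilable by `P`. -/
def MSet {d : ℕ} (P : Set (Fin d → ℕ)) : Set (Fin d → ℕ) :=
  MinOf {t | (∀ i, 0 < t i) ∧ Tilable P t}

/-- `rank(P) = card M(P)`. -/
def brickRank {d : ℕ} (P : Set (Fin d → ℕ)) : ℕ := (MSet P).ncard

/-- `comb_δ(A)`: gcd of the `δ`-th sidelengths, lcm of the others. -/
def combN {d : ℕ} (δ : Fin d) (A : Finset (Fin d → ℕ)) : Fin d → ℕ :=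
  fun j => if j = δ then A.gcd (fun b => b δ) else A.lcm (fun b => b j)

/-- `Ext_δ(Q) = { comb_δ(A) : A a nonempty (finite) subset of Q }`. -/
def ExtN {d : ℕ} (δ : Fin d) (Q : Set (Fin d → ℕ)) : Set (Fin d → ℕ) :=
  {b | ∃ A : Finset (Fin d → ℕ), A.Nonempty ∧ ↑A ⊆ Q ∧ b = combN δ A}

/-- `Ext_{1..d}(Q) = Ext_d (Ext_{d-1} (⋯ (Ext_1 Q) ⋯))`. -/
def ExtAllN {d : ℕ} (Q : Set (Fin d → ℕ)) : Set (Fin d → ℕ) :=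
  (List.finRange d).foldl (fun S δ => ExtN δ S) Q

/-- Idempotence of extension operators: for every dimension `d ≥ 1`,
every direction `δ`, and every finite set `P` of `d`-dimensional bricks,
`Ext_δ(Ext_δ(P)) = Ext_δ(P)`. -/
theorem statement16 {d : ℕ} (hd : 1 ≤ d) (δ : Fin d) (P : Finset (Fin d → ℕ))
    (hpos : ∀ b ∈ P, ∀ k, 0 < b k) :
    ExtN δ (ExtN δ (↑P : Set (Fin d → ℕ))) = ExtN δ (↑P : Set (Fin d → ℕ)) := by
  apply Set.Subset.antisymm
  · rintro b ⟨B, hBne, hBsub, rfl⟩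
    -- each x ∈ B has a witness
    choose A hAne hAsub hAeq using fun x (hx : x ∈ B) => hBsub hx
    let U : Finset (Fin d → ℕ) := B.attach.biUnion (fun x => A x.1 x.2)
    refine ⟨U, ?_, ?_, ?_⟩
    · obtain ⟨x, hx⟩ := hBne
      obtain ⟨a, ha⟩ := hAne x hx
      exact ⟨a, Finset.mem_biUnion.2 ⟨⟨x, hx⟩, Finset.mem_attach _ _, ha⟩⟩
    · intro a ha
      obtain ⟨x, _, hax⟩ := Finset.mem_biUnion.1 ha
      exact hAsub x.1 x.2 hax
    · funext j
      by_cases hj : j = δ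
      · subst hj
        simp only [combN, if_pos rfl]
        apply Nat.dvd_antisymm
        · apply Finset.dvd_gcd
          intro a ha
          obtain ⟨x, _, hax⟩ := Finset.mem_biUnion.1 ha
          refine dvd_trans (Finset.gcd_dvd x.2) ?_
          rw [hAeq x.1 x.2]
          simp only [combN, if_pos rfl]
          exact Finset.gcd_dvd hax
        · apply Finset.dvd_gcd
          intro a ha
          have h : U.gcd (fun b => b j) ∣ combN j (A a ha) j := by
            simp only [combN, if_pos rfl]
            exact Finset.dvd_gcd fun c hc =>
              Finset.gcd_dvd (Finset.mem_biUnion.2 ⟨⟨a, ha⟩, Finset.mem_attach _ _, hc⟩)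
          rw [← hAeq a ha] at h
          simpa using h
      · simp only [combN, if_neg hj]
        apply Nat.dvd_antisymm
        · apply Finset.lcm_dvd
          intro x hx
          rw [hAeq x hx]
          simp only [combN, if_neg hj]
          apply Finset.lcm_dvd
          intro c hc
          exact Finset.dvd_lcm (Finset.mem_biUnion.2 ⟨⟨x, hx⟩, Finset.mem_attach _ _, hc⟩)
        · apply Finset.lcm_dvd
          intro a ha
          obtain ⟨x, _, hax⟩ := Finset.mem_biUnion.1 ha
          refine dvd_trans ?_ (Finset.dvd_lcm x.2)
          rw [hAeq x.1 x.2]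
          simp only [combN, if_neg hj]
          exact Finset.dvd_lcm hax
  · rintro b hb
    refine ⟨{b}, Finset.singleton_nonempty _, by simpa using hb, ?_⟩
    funext j
    by_cases hj : j = δ <;> simp [combN, hj]
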